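/- (Corollary 2.) Let m, n₀, n₁ be positive integers with m ≥ 4, gcd(n₀, n₁) = 1 and gcd(n₁, m) = 1, and suppose n₁ is prime. If there is no positive integer k with n₁ = m·k − 1 (i.e. n₁ is not congruent to −1 modulo m), then equation (2) has no integer polynomial solution. -/

import Mathlib

open Polynomial

/-- `x, y, z ∈ ℤ[λ]` form an integer polynomial solution of equation (2). -/
def IsIntPolySolution (m n₀ n₁ : ℤ) (x y z : Polynomial ℤ) : Prop :=
  (∀ t : ℕ, 0 < x.eval (t : ℤ)) ∧ (∀ t : ℕ, 0 < y.eval (t : ℤ)) ∧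
  (∀ t : ℕ, 0 < z.eval (t : ℤ)) ∧
  C m * (x * y * z) = (C n₀ + C n₁ * X) * (x * y + x * z + y * z)

open Filter in
lemma pos_lc (p : Polynomial ℤ) (hp : ∀ t : ℕ, 0 < p.eval (t : ℤ)) :
    p ≠ 0 ∧ 0 < p.leadingCoeff := by
  have hp0 : p ≠ 0 := by
    intro h0; have := hp 0; simp [h0] at this
  refine ⟨hp0, ?_⟩
  by_contra hle
  push_neg at hle
  have hlc : p.leadingCoeff < 0 := lt_of_le_of_ne hle (leadingCoeff_ne_zero.mpr hp0)
  rcases Nat.eq_zero_or_pos p.natDegree with hd | hd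
  · have hC := eq_C_of_natDegree_eq_zero hd
    have hco : p.coeff 0 = p.leadingCoeff := by rw [leadingCoeff, hd]
    have := hp 0
    rw [hC] at this; simp only [eval_C] at this
    omega
  · have hinj : Function.Injective (Int.castRingHom ℝ) := Int.cast_injective
    set q : Polynomial ℝ := -(p.map (Int.castRingHom ℝ)) with hq
    have hqlc : 0 ≤ q.leadingCoeff := by
      rw [hq, leadingCoeff_neg, Polynomial.leadingCoeff_map_of_injective hinj]
      simp only [neg_nonneg, eq_intCast]
      exact_mod_cast hlc.le
    have hqdeg : 0 < q.degree := by
      rw [hq, degree_neg, degree_map_eq_of_injective hinj]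
      rw [degree_eq_natDegree hp0]
      exact_mod_cast hd
    have htend := tendsto_atTop_of_leadingCoeff_nonneg q hqdeg hqlc
    obtain ⟨X₀, hX₀⟩ := (htend.eventually_ge_atTop 1).exists_forall_of_atTop
    have ht := hX₀ (⌈X₀⌉₊ : ℝ) (Nat.le_ceil X₀)
    have heval : q.eval ((⌈X₀⌉₊ : ℕ) : ℝ) = -(↑(p.eval ((⌈X₀⌉₊ : ℕ) : ℤ)) : ℝ) := by
      rw [hq, eval_neg, eval_map]
      have : (((⌈X₀⌉₊ : ℕ) : ℝ)) = (Int.castRingHom ℝ) ((⌈X₀⌉₊ : ℕ) : ℤ) := by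
        simp
      rw [this, eval₂_at_apply]
      simp
    rw [show ((⌈X₀⌉₊ : ℝ)) = (((⌈X₀⌉₊ : ℕ) : ℝ)) by norm_num] at ht
    rw [heval] at ht
    have hcast : (0:ℝ) < (↑(p.eval ((⌈X₀⌉₊:ℕ) : ℤ)) : ℝ) := by exact_mod_cast hp ⌈X₀⌉₊
    linarith

lemma add_lc (p q : Polynomial ℤ) (hp : 0 < p.leadingCoeff) (hq : 0 < q.leadingCoeff) :
    0 < (p + q).leadingCoeff ∧ (p + q).natDegree = max p.natDegree q.natDegree := by
  have hp0 : p ≠ 0 := leadingCoeff_ne_zero.mp hp.ne'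
  have hq0 : q ≠ 0 := leadingCoeff_ne_zero.mp hq.ne'
  rcases lt_trichotomy p.natDegree q.natDegree with hlt | heq | hgt
  · have hdeg : p.degree < q.degree := by
      rw [degree_eq_natDegree hp0, degree_eq_natDegree hq0]; exact_mod_cast hlt
    rw [leadingCoeff_add_of_degree_lt hdeg, natDegree_add_eq_right_of_natDegree_lt hlt]
    exact ⟨hq, (max_eq_right hlt.le).symm⟩
  · have hco : (p + q).coeff p.natDegree = p.leadingCoeff + q.leadingCoeff := by
      rw [coeff_add, leadingCoeff, leadingCoeff, heq]
    have hpos : 0 < (p + q).coeff p.natDegree := by rw [hco]; positivity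
    have hle : (p + q).natDegree ≤ p.natDegree := by
      refine natDegree_add_le_of_degree_le le_rfl ?_
      omega
    have hge : p.natDegree ≤ (p + q).natDegree := le_natDegree_of_ne_zero hpos.ne'
    have hdeq : (p + q).natDegree = p.natDegree := le_antisymm hle hge
    constructor
    · rw [leadingCoeff, hdeq]; exact hpos
    · rw [hdeq]; omega
  · have hdeg : q.degree < p.degree := by
      rw [degree_eq_natDegree hp0, degree_eq_natDegree hq0]; exact_mod_cast hgt
    rw [add_comm, leadingCoeff_add_of_degree_lt hdeg, natDegree_add_eq_right_of_natDegree_lt hgt]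
    exact ⟨hp, (max_eq_left hgt.le).symm⟩

lemma n_prime (n₀ n₁ : ℤ) (hn₁ : n₁ ≠ 0) (hcop : Int.gcd n₀ n₁ = 1) :
    Prime (C n₀ + C n₁ * X : Polynomial ℤ) := by
  set n : Polynomial ℤ := C n₀ + C n₁ * X with hn
  have hrw : n = C n₁ * X + C n₀ := by rw [hn]; ring
  have hdeg : n.natDegree = 1 := by rw [hrw]; exact natDegree_linear hn₁
  have hn0 : n ≠ 0 := fun h0 => by simp [h0] at hdeg
  have hprim : ∀ r : ℤ, C r ∣ n → IsUnit r := by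
    intro r hr
    rw [C_dvd_iff_dvd_coeff] at hr
    have h0 : r ∣ n₀ := by have := hr 0; simpa [hn] using this
    have h1 : r ∣ n₁ := by
      have := hr 1
      rw [hn, coeff_add, coeff_C_mul, coeff_X_one, mul_one, coeff_C] at this
      simpa using this
    have : r ∣ (Int.gcd n₀ n₁ : ℤ) := Int.dvd_coe_gcd h0 h1
    rw [hcop] at this
    exact isUnit_of_dvd_one this
  have hirr : Irreducible n := by
    constructor
    · intro hu
      have := natDegree_eq_zero_of_isUnit hu
      omega
    · intro a b hab
      have ha0 : a ≠ 0 := fun h => hn0 (by rw [hab, h, zero_mul])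
      have hb0 : b ≠ 0 := fun h => hn0 (by rw [hab, h, mul_zero])
      have hsum : a.natDegree + b.natDegree = 1 := by
        rw [← natDegree_mul ha0 hb0, ← hab, hdeg]
      rcases Nat.eq_zero_or_pos a.natDegree with haz | hap
      · left
        obtain ⟨r, hr⟩ : ∃ r, a = C r := ⟨a.coeff 0, eq_C_of_natDegree_eq_zero haz⟩
        have : IsUnit r := hprim r ⟨b, by rw [hab, hr]⟩
        rw [hr]; exact isUnit_C.mpr this
      · right
        have hbz : b.natDegree = 0 := by omega
        obtain ⟨r, hr⟩ : ∃ r, b = C r := ⟨b.coeff 0, eq_C_of_natDegree_eq_zero hbz⟩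
        have : IsUnit r := hprim r ⟨a, by rw [hab, hr]; ring⟩
        rw [hr]; exact isUnit_C.mpr this
  exact hirr.prime

lemma nt_core (m n₁ a' b : ℤ) (hm : 4 ≤ m) (hn₁ : 0 < n₁) (hprime : Prime n₁)
    (h : ¬ ∃ k : ℤ, 0 < k ∧ n₁ = m * k - 1)
    (ha : 0 < a') (hb : 0 < b) (heq : m * a' * b = n₁ * (a' + b)) (hdvd : n₁ ∣ a') :
    False := by
  obtain ⟨a, rfl⟩ := hdvd
  have hapos : 0 < a := by nlinarith
  have heq2 : b * (m * a - 1) = n₁ * a := by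
    have := mul_left_cancel₀ hn₁.ne' (show n₁ * (m * a * b) = n₁ * (n₁ * a + b) by ring_nf; linarith [heq])
    linarith
  have hcop : IsCoprime a (m * a - 1) := ⟨m, -1, by ring⟩
  have hab : a ∣ b := by
    have : a ∣ b * (m * a - 1) := ⟨n₁, by linarith⟩
    exact hcop.dvd_of_dvd_mul_right this
  obtain ⟨c, rfl⟩ := hab
  have heq3 : c * (m * a - 1) = n₁ := by
    have := mul_left_cancel₀ hapos.ne' (show a * (c * (m * a - 1)) = a * n₁ by ring_nf; linarith [heq2])
    linarith
  have hma : 3 ≤ m * a - 1 := by nlinarith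
  have hcpos : 0 < c := by nlinarith
  rcases hprime.irreducible.isUnit_or_isUnit heq3.symm with hu | hu
  · rw [Int.isUnit_iff] at hu
    have hc1 : c = 1 := by omega
    rw [hc1, one_mul] at heq3
    exact h ⟨a, hapos, heq3.symm⟩
  · rw [Int.isUnit_iff] at hu
    omega

lemma not_dvd_C' (n : Polynomial ℤ) (hn : n.natDegree = 1) (e : ℤ) (he : e ≠ 0) :
    ¬ n ∣ C e := by
  intro hd
  have hC0 : (C e : Polynomial ℤ) ≠ 0 := by simpa using he
  have := natDegree_le_of_dvd hd hC0
  rw [hn, natDegree_C] at this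
  omega

lemma dvd_lin (n x : Polynomial ℤ) (hn : n.natDegree = 1) (hx : x.natDegree = 1)
    (hx0 : x ≠ 0) (hdvd : n ∣ x) : ∃ c : ℤ, x = n * C c := by
  obtain ⟨u, hu⟩ := hdvd
  have hn0 : n ≠ 0 := fun h => hx0 (by rw [hu, h, zero_mul])
  have hu0 : u ≠ 0 := fun h => hx0 (by rw [hu, h, mul_zero])
  have : x.natDegree = n.natDegree + u.natDegree := by rw [hu, natDegree_mul hn0 hu0]
  have hud : u.natDegree = 0 := by omega
  refine ⟨u.coeff 0, ?_⟩
  conv_lhs => rw [hu, eq_C_of_natDegree_eq_zero hud]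

lemma eval_n_zero (n₀ n₁ : ℤ) : (C n₀ + C n₁ * X : Polynomial ℤ).eval 0 = n₀ := by simp

lemma case_lin2 (m n₀ n₁ c : ℤ) (hm : 4 ≤ m) (hn₀ : 0 < n₀) (hn₁ : 0 < n₁) (hc : 0 < c)
    (hnprime : Prime (C n₀ + C n₁ * X : Polynomial ℤ))
    (hndeg : (C n₀ + C n₁ * X : Polynomial ℤ).natDegree = 1)
    (y z : Polynomial ℤ)
    (hy : ∀ t : ℕ, 0 < y.eval (t : ℤ)) (hz : ∀ t : ℕ, 0 < z.eval (t : ℤ))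
    (hdy : y.natDegree = 1) (hdz : z.natDegree = 1)
    (eq1 : C m * C c * (y * z) = (C n₀ + C n₁ * X) * (C c * (y + z)) + y * z)
    (hdvd : (C n₀ + C n₁ * X : Polynomial ℤ) ∣ y) : False := by
  set n : Polynomial ℤ := C n₀ + C n₁ * X with hnn
  have hn0 : n ≠ 0 := hnprime.ne_zero
  have hy0 : y ≠ 0 := fun h => by simpa [h] using hy 0
  have hz0 : z ≠ 0 := fun h => by simpa [h] using hz 0
  obtain ⟨d, hd⟩ := dvd_lin n y hndeg hdy hy0 hdvd
  have hdpos : 0 < d := by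
    have h1 : 0 < y.eval 0 := by simpa using hy 0
    rw [hd, eval_mul, eval_n_zero, eval_C] at h1
    rcases mul_pos_iff.mp h1 with ⟨_, h⟩ | ⟨h, _⟩
    · exact h
    · linarith
  -- cancel n from the substituted equation
  have eq2 : C m * C c * C d * z = C c * (n * C d + z) + C d * z := by
    apply mul_left_cancel₀ hn0
    rw [hd] at eq1
    ring_nf
    ring_nf at eq1
    linear_combination eq1
  set E : ℤ := m * c * d - c - d with hE
  have hEpos : 0 < E := by rw [hE]; nlinarith [mul_pos hc hdpos]
  have hCE : (C E : Polynomial ℤ) = C m * C c * C d - C c - C d := by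
    rw [hE]; push_cast [C_sub, C_mul]; ring
  have heq3 : z * C E = n * C (c * d) := by
    rw [hCE, C_mul]
    linear_combination eq2
  have hdvd2 : n ∣ z * C E := ⟨C (c * d), heq3⟩
  have hdvd3 : n ∣ z := by
    rcases hnprime.dvd_mul.mp hdvd2 with h | h
    · exact h
    · exact absurd h (not_dvd_C' n hndeg E hEpos.ne')
  obtain ⟨w, hw⟩ := dvd_lin n z hndeg hdz hz0 hdvd3
  have hwpos : 0 < w := by
    have h1 : 0 < z.eval 0 := by simpa using hz 0
    rw [hw, eval_mul, eval_n_zero, eval_C] at h1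
    rcases mul_pos_iff.mp h1 with ⟨_, h⟩ | ⟨h, _⟩
    · exact h
    · linarith
  -- final numeric identity w * E = c * d
  have hfin : w * E = c * d := by
    rw [hw] at heq3
    have h2 : C (w * E) = C (c * d) :=
      mul_left_cancel₀ hn0 (by rw [C_mul]; linear_combination heq3)
    exact C_injective h2
  rw [hE] at hfin
  have h1 : 0 ≤ w * c * (d - 1) :=
    mul_nonneg (mul_nonneg hwpos.le hc.le) (by omega)
  have h2 : 0 ≤ w * d * (c - 1) :=
    mul_nonneg (mul_nonneg hwpos.le hdpos.le) (by omega)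
  have h3 : 0 ≤ c * d * (w - 1) :=
    mul_nonneg (mul_nonneg hc.le hdpos.le) (by omega)
  have h4 : 0 ≤ (m - 4) * (w * c * d) :=
    mul_nonneg (by omega) (mul_nonneg (mul_nonneg hwpos.le hc.le) hdpos.le)
  have h5 : 1 ≤ w * c * d := by
    have := mul_pos (mul_pos hwpos hc) hdpos; omega
  linarith

lemma sol_swap_xy {m n₀ n₁ : ℤ} {x y z : Polynomial ℤ}
    (sol : IsIntPolySolution m n₀ n₁ x y z) : IsIntPolySolution m n₀ n₁ y x z := by
  obtain ⟨hx, hy, hz, heq⟩ := sol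
  exact ⟨hy, hx, hz, by linear_combination heq⟩

lemma sol_swap_yz {m n₀ n₁ : ℤ} {x y z : Polynomial ℤ}
    (sol : IsIntPolySolution m n₀ n₁ x y z) : IsIntPolySolution m n₀ n₁ x z y := by
  obtain ⟨hx, hy, hz, heq⟩ := sol
  exact ⟨hx, hz, hy, by linear_combination heq⟩

lemma case_lin (m n₀ n₁ : ℤ) (hm : 4 ≤ m) (hn₀ : 0 < n₀) (hn₁ : 0 < n₁)
    (hnprime : Prime (C n₀ + C n₁ * X : Polynomial ℤ))
    (hndeg : (C n₀ + C n₁ * X : Polynomial ℤ).natDegree = 1)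
    (x y z : Polynomial ℤ) (sol : IsIntPolySolution m n₀ n₁ x y z)
    (hdx : x.natDegree = 1) (hdy : y.natDegree = 1) (hdz : z.natDegree = 1)
    (hdvd : (C n₀ + C n₁ * X : Polynomial ℤ) ∣ x) : False := by
  obtain ⟨hx, hy, hz, heq⟩ := sol
  set n : Polynomial ℤ := C n₀ + C n₁ * X with hnn
  have hn0 : n ≠ 0 := hnprime.ne_zero
  have hx0 : x ≠ 0 := fun h => by simpa [h] using hx 0
  obtain ⟨c, hcx⟩ := dvd_lin n x hndeg hdx hx0 hdvd
  have hcpos : 0 < c := by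
    have h1 : 0 < x.eval 0 := by simpa using hx 0
    rw [hcx, eval_mul, eval_n_zero, eval_C] at h1
    rcases mul_pos_iff.mp h1 with ⟨_, h⟩ | ⟨h, _⟩
    · exact h
    · linarith
  have eq1 : C m * C c * (y * z) = n * (C c * (y + z)) + y * z := by
    apply mul_left_cancel₀ hn0
    rw [hcx] at heq
    ring_nf
    ring_nf at heq
    linear_combination heq
  have heq4 : (y * z) * (C m * C c - 1) = n * (C c * (y + z)) := by
    linear_combination eq1
  have hdvdyz : n ∣ (y * z) * (C m * C c - 1) := ⟨C c * (y + z), heq4⟩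
  have hCmc : (C m * C c - 1 : Polynomial ℤ) = C (m * c - 1) := by
    rw [C_sub, C_mul, C_1]
  have hmc1 : m * c - 1 ≠ 0 := by nlinarith
  have hyz : n ∣ y * z := by
    rcases hnprime.dvd_mul.mp hdvdyz with h | h
    · exact h
    · rw [hCmc] at h
      exact absurd h (not_dvd_C' n hndeg _ hmc1)
  rcases hnprime.dvd_mul.mp hyz with h | h
  · exact case_lin2 m n₀ n₁ c hm hn₀ hn₁ hcpos hnprime hndeg y z hy hz hdy hdz eq1 h
  · have eq1' : C m * C c * (z * y) = n * (C c * (z + y)) + z * y := by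
      linear_combination eq1
    exact case_lin2 m n₀ n₁ c hm hn₀ hn₁ hcpos hnprime hndeg z y hz hy hdz hdy eq1' h

lemma key (m n₀ n₁ : ℤ) (hm : 4 ≤ m) (hn₀ : 0 < n₀) (hn₁ : 0 < n₁)
    (hcop : Int.gcd n₀ n₁ = 1) (hcop' : Int.gcd n₁ m = 1) (hprime : Prime n₁)
    (h : ¬ ∃ k : ℤ, 0 < k ∧ n₁ = m * k - 1)
    (x y z : Polynomial ℤ) (sol : IsIntPolySolution m n₀ n₁ x y z)
    (hord1 : y.natDegree ≤ x.natDegree) (hord2 : z.natDegree ≤ y.natDegree) : False := by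
  obtain ⟨hx, hy, hz, heq⟩ := id sol
  obtain ⟨hx0, hlx⟩ := pos_lc x hx
  obtain ⟨hy0, hly⟩ := pos_lc y hy
  obtain ⟨hz0, hlz⟩ := pos_lc z hz
  set n : Polynomial ℤ := C n₀ + C n₁ * X with hnn
  have hnrw : n = C n₁ * X + C n₀ := by rw [hnn]; ring
  have hndeg : n.natDegree = 1 := by rw [hnrw]; exact natDegree_linear hn₁.ne'
  have hnlc : n.leadingCoeff = n₁ := by rw [hnrw]; exact leadingCoeff_linear hn₁.ne'
  have hn0 : n ≠ 0 := fun h0 => by simp [h0] at hndeg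
  have hm0 : m ≠ 0 := by omega
  -- degrees of products
  have hdA : (x * y).natDegree = x.natDegree + y.natDegree := natDegree_mul hx0 hy0
  have hdB : (x * z).natDegree = x.natDegree + z.natDegree := natDegree_mul hx0 hz0
  have hdC : (y * z).natDegree = y.natDegree + z.natDegree := natDegree_mul hy0 hz0
  have hlA : 0 < (x * y).leadingCoeff := by rw [leadingCoeff_mul]; positivity
  have hlB : 0 < (x * z).leadingCoeff := by rw [leadingCoeff_mul]; positivity
  have hlC : 0 < (y * z).leadingCoeff := by rw [leadingCoeff_mul]; positivity
  obtain ⟨hlAB, hdAB⟩ := add_lc _ _ hlA hlB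
  obtain ⟨hlS, hdS'⟩ := add_lc _ _ hlAB hlC
  have hS0 : (x * y + x * z + y * z) ≠ 0 := leadingCoeff_ne_zero.mp hlS.ne'
  have hdS : (x * y + x * z + y * z).natDegree = x.natDegree + y.natDegree := by
    rw [hdS', hdAB, hdA, hdB, hdC]; omega
  -- natDegree of the equation gives z.natDegree = 1
  have hdeq := congrArg natDegree heq
  have hxyz0 : x * y * z ≠ 0 := by
    exact mul_ne_zero (mul_ne_zero hx0 hy0) hz0
  rw [natDegree_C_mul hm0, natDegree_mul (mul_ne_zero hx0 hy0) hz0,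
    natDegree_mul hx0 hy0, natDegree_mul hn0 hS0, hndeg, hdS] at hdeq
  have hdz1 : z.natDegree = 1 := by omega
  -- leadingCoeff of the equation
  have hlceq := congrArg leadingCoeff heq
  rw [leadingCoeff_mul, leadingCoeff_mul, leadingCoeff_mul, leadingCoeff_mul,
    leadingCoeff_C, hnlc] at hlceq
  -- leadingCoeff of S as coefficient
  have hlcS : (x * y + x * z + y * z).leadingCoeff
      = (x * y).coeff (x.natDegree + y.natDegree)
        + (x * z).coeff (x.natDegree + y.natDegree)
        + (y * z).coeff (x.natDegree + y.natDegree) := by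
    rw [leadingCoeff, hdS, coeff_add, coeff_add]
  have hcoA : (x * y).coeff (x.natDegree + y.natDegree) = x.leadingCoeff * y.leadingCoeff :=
    coeff_mul_degree_add_degree x y
  rcases lt_or_eq_of_le hord2 with hlt | heqd
  · -- z.natDegree < y.natDegree : coefficient of x*z and y*z vanish
    have hcoB : (x * z).coeff (x.natDegree + y.natDegree) = 0 :=
      coeff_eq_zero_of_natDegree_lt (by omega)
    have hcoC : (y * z).coeff (x.natDegree + y.natDegree) = 0 :=
      coeff_eq_zero_of_natDegree_lt (by omega)
    rw [hlcS, hcoA, hcoB, hcoC, add_zero, add_zero] at hlceq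
    have hmlz : m * z.leadingCoeff = n₁ := by
      have hne : x.leadingCoeff * y.leadingCoeff ≠ 0 := by positivity
      apply mul_right_cancel₀ hne
      linear_combination hlceq
    have hdvd : m ∣ (Int.gcd n₁ m : ℤ) := Int.dvd_coe_gcd ⟨z.leadingCoeff, hmlz.symm⟩ dvd_rfl
    rw [hcop'] at hdvd
    rcases Int.isUnit_iff.mp (isUnit_of_dvd_one hdvd) with h1 | h1 <;> omega
  · -- y.natDegree = z.natDegree = 1
    have hdy1 : y.natDegree = 1 := by omega
    rcases lt_or_eq_of_le hord1 with hxlt | hxeq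
    · -- x.natDegree ≥ 2
      have hcoB : (x * z).coeff (x.natDegree + y.natDegree)
          = x.leadingCoeff * z.leadingCoeff := by
        have : x.natDegree + y.natDegree = x.natDegree + z.natDegree := by omega
        rw [this]; exact coeff_mul_degree_add_degree x z
      have hcoC : (y * z).coeff (x.natDegree + y.natDegree) = 0 :=
        coeff_eq_zero_of_natDegree_lt (by omega)
      rw [hlcS, hcoA, hcoB, hcoC, add_zero] at hlceq
      have hEq : m * (y.leadingCoeff * z.leadingCoeff)
          = n₁ * (y.leadingCoeff + z.leadingCoeff) := by
        apply mul_left_cancel₀ hlx.ne'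
        linear_combination hlceq
      have hdvd : n₁ ∣ y.leadingCoeff * z.leadingCoeff ∨ n₁ ∣ m := by
        rcases hprime.dvd_mul.mp (⟨y.leadingCoeff + z.leadingCoeff,
          by linear_combination hEq⟩ : n₁ ∣ m * (y.leadingCoeff * z.leadingCoeff)) with hh | hh
        · exact Or.inr hh
        · exact Or.inl hh
      rcases hdvd with hh | hh
      · rcases hprime.dvd_mul.mp hh with hh' | hh'
        · exact nt_core m n₁ y.leadingCoeff z.leadingCoeff hm hn₁ hprime h hly hlz
            (by linear_combination hEq) hh'
        · exact nt_core m n₁ z.leadingCoeff y.leadingCoeff hm hn₁ hprime h hlz hly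
            (by linear_combination hEq) hh'
      · have hdvd' : n₁ ∣ (Int.gcd n₁ m : ℤ) := Int.dvd_coe_gcd dvd_rfl hh
        rw [hcop'] at hdvd'
        exact hprime.not_isUnit (isUnit_of_dvd_one hdvd')
    · -- all degrees equal 1
      have hdx1 : x.natDegree = 1 := by omega
      have hnprime : Prime n := n_prime n₀ n₁ hn₁.ne' hcop
      have hdvdall : n ∣ C m * (x * y * z) := ⟨x * y + x * z + y * z, heq⟩
      have hdxyz : n ∣ x * y * z := by
        rcases hnprime.dvd_mul.mp hdvdall with hh | hh
        · exact absurd hh (not_dvd_C' n hndeg m hm0)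
        · exact hh
      rcases hnprime.dvd_mul.mp hdxyz with hh | hh
      · rcases hnprime.dvd_mul.mp hh with hh' | hh'
        · exact case_lin m n₀ n₁ hm hn₀ hn₁ hnprime hndeg x y z sol hdx1 hdy1 hdz1 hh'
        · exact case_lin m n₀ n₁ hm hn₀ hn₁ hnprime hndeg y x z (sol_swap_xy sol)
            hdy1 hdx1 hdz1 hh'
      · exact case_lin m n₀ n₁ hm hn₀ hn₁ hnprime hndeg z x y
          (sol_swap_xy (sol_swap_yz sol)) hdz1 hdx1 hdy1 hh

/-- Corollary 2: if `n₁` is prime and not of the form `m·k − 1`,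
then equation (2) has no integer polynomial solution. -/
theorem corollary2 (m n₀ n₁ : ℤ) (hm : 4 ≤ m) (hn₀ : 0 < n₀) (hn₁ : 0 < n₁)
    (hcop : Int.gcd n₀ n₁ = 1) (hcop' : Int.gcd n₁ m = 1)
    (hprime : Prime n₁)
    (h : ¬ ∃ k : ℤ, 0 < k ∧ n₁ = m * k - 1) :
    ¬ ∃ x y z : Polynomial ℤ, IsIntPolySolution m n₀ n₁ x y z := by
  rintro ⟨x, y, z, sol⟩
  rcases le_total y.natDegree x.natDegree with h1 | h1 <;>
    rcases le_total z.natDegree y.natDegree with h2 | h2 <;>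
      rcases le_total z.natDegree x.natDegree with h3 | h3
  · exact key m n₀ n₁ hm hn₀ hn₁ hcop hcop' hprime h x y z sol h1 h2
  · exact key m n₀ n₁ hm hn₀ hn₁ hcop hcop' hprime h x y z sol h1 h2
  · exact key m n₀ n₁ hm hn₀ hn₁ hcop hcop' hprime h x z y (sol_swap_yz sol) h3 h2
  · exact key m n₀ n₁ hm hn₀ hn₁ hcop hcop' hprime h z x y
      (sol_swap_xy (sol_swap_yz sol)) h3 h1
  · exact key m n₀ n₁ hm hn₀ hn₁ hcop hcop' hprime h y x z (sol_swap_xy sol) h1 h3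
  · exact key m n₀ n₁ hm hn₀ hn₁ hcop hcop' hprime h y z x
      (sol_swap_yz (sol_swap_xy sol)) h2 h3
  · exact key m n₀ n₁ hm hn₀ hn₁ hcop hcop' hprime h z y x
      (sol_swap_xy (sol_swap_yz (sol_swap_xy sol))) h2 h1
  · exact key m n₀ n₁ hm hn₀ hn₁ hcop hcop' hprime h z y x
      (sol_swap_xy (sol_swap_yz (sol_swap_xy sol))) h2 h1
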